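/- Suppose the nonnegative matrix B is doubly stochastically scalable by R B C with R = diag(r), C = diag(c) positive diagonal, and B is symmetric. If I is the index set of an irreducible diagonal block of B (after symmetric permutation to block-diagonal irreducible form), then the restriction of r to I is proportional to the restriction of c to I, and with x = √(r c) (element-wise), diag(x) B diag(x) is doubly stochastic. -/

import Mathlib

/-- `M` is doubly stochastic: nonnegative with unit row and column sums. -/
def IsDoublyStochastic {n : ℕ} (M : Matrix (Fin n) (Fin n) ℝ) : Prop :=
  (∀ i j, 0 ≤ M i j) ∧ (∀ i, ∑ j, M i j = 1) ∧ (∀ j, ∑ i, M i j = 1)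

lemma key_lemma {n : ℕ} (S : Matrix (Fin n) (Fin n) ℝ) (t : Fin n → ℝ)
    (ht : ∀ i, 0 < t i) (hS : ∀ i j, 0 ≤ S i j)
    (hrel : ∀ i j, t i * S j i = t j * S i j) :
    ∀ F : Finset (Fin n), (∀ i ∈ F, ∑ j ∈ F, S i j = 1) →
      (∀ i ∈ F, ∑ j ∈ F, S j i = 1) →
      ∀ i ∈ F, ∀ j ∈ F, S i j ≠ 0 → t i = t j := by
  intro F
  induction F using Finset.strongInduction with
  | _ F ih =>
    intro hrow hcol i hi j hj hne
    obtain ⟨i₀, hi₀, hmax⟩ := F.exists_max_image t ⟨i, hi⟩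
    -- Step A: any row at a maximizer has support only at maximizers
    have stepA : ∀ a ∈ F, t a = t i₀ → ∀ b ∈ F, S a b ≠ 0 → t b = t a := by
      intro a ha hta b hb hSab
      have e1 : ∑ k ∈ F, S a k * t k = t a := by
        have : ∀ k ∈ F, S a k * t k = t a * S k a := by
          intro k hk
          rw [mul_comm (S a k) (t k)]
          exact (hrel a k).symm
        rw [Finset.sum_congr rfl this, ← Finset.mul_sum, hcol a ha, mul_one]
      have e2 : ∑ k ∈ F, S a k * (t a - t k) = 0 := by
        have : ∑ k ∈ F, S a k * (t a - t k)
            = (∑ k ∈ F, S a k) * t a - ∑ k ∈ F, S a k * t k := by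
          rw [Finset.sum_mul, ← Finset.sum_sub_distrib]
          exact Finset.sum_congr rfl (fun k hk => by ring)
        rw [this, hrow a ha, one_mul, e1, sub_self]
      have hnn : ∀ k ∈ F, 0 ≤ S a k * (t a - t k) := by
        intro k hk
        have : t k ≤ t a := hta ▸ hmax k hk
        exact mul_nonneg (hS a k) (by linarith)
      have := (Finset.sum_eq_zero_iff_of_nonneg hnn).mp e2 b hb
      rcases mul_eq_zero.mp this with h | h
      · exact absurd h hSab
      · linarith
    by_cases hti : t i = t i₀
    · exact (stepA i hi hti j hj hne).symm
    · -- i is not a maximizer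
      set M : Finset (Fin n) := F.filter (fun a => t a = t i₀) with hM
      have hMF : M ⊆ F := Finset.filter_subset _ _
      have hiM : i ∉ M := fun h => hti (Finset.mem_filter.mp h).2
      have hjM : j ∉ M := by
        intro h
        obtain ⟨hjF, htj⟩ := Finset.mem_filter.mp h
        -- then S j i ≠ 0 via hrel, so t i = t j = max, contradiction
        have hSji : S j i ≠ 0 := by
          intro h0
          have := hrel i j
          rw [h0, mul_zero] at this
          exact hne (by
            have htj0 : t j ≠ 0 := ne_of_gt (ht j)
            field_simp at this
            exact (mul_eq_zero.mp this.symm).resolve_left htj0)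
        have := stepA j hjF htj i hi hSji
        exact hti (this.trans htj)
      -- rows/cols restricted to F \ M
      have rowzero : ∀ a ∈ F, a ∉ M → ∀ b ∈ M, S a b = 0 := by
        intro a ha haM b hbM
        by_contra hSab
        obtain ⟨hbF, htb⟩ := Finset.mem_filter.mp hbM
        -- S b a ≠ 0
        have hSba : S b a ≠ 0 := by
          intro h0
          have := hrel a b
          rw [h0, mul_zero] at this
          have hta0 : t a ≠ 0 := ne_of_gt (ht a)
          rcases mul_eq_zero.mp this.symm with h | h
          · exact absurd h (ne_of_gt (ht b))
          · exact hSab h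
        have := stepA b hbF htb a ha hSba
        exact haM (Finset.mem_filter.mpr ⟨ha, this.trans htb⟩)
      have colzero : ∀ a ∈ M, ∀ b ∈ F, b ∉ M → S a b = 0 := by
        intro a haM b hbF hbM
        obtain ⟨haF, hta⟩ := Finset.mem_filter.mp haM
        by_contra hSab
        have := stepA a haF hta b hbF hSab
        exact hbM (Finset.mem_filter.mpr ⟨hbF, this.trans hta⟩)
      have hssub : F \ M ⊂ F := by
        refine Finset.sdiff_ssubset ?_ ?_ <;>
          first
          | exact hMF
          | exact ⟨i₀, Finset.mem_filter.mpr ⟨hi₀, rfl⟩⟩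
      have hrow' : ∀ a ∈ F \ M, ∑ b ∈ F \ M, S a b = 1 := by
        intro a ha
        obtain ⟨haF, haM⟩ := Finset.mem_sdiff.mp ha
        rw [Finset.sum_sdiff_eq_sub hMF]
        have : ∑ b ∈ M, S a b = 0 :=
          Finset.sum_eq_zero (fun b hb => rowzero a haF haM b hb)
        rw [this, hrow a haF, sub_zero]
      have hcol' : ∀ a ∈ F \ M, ∑ b ∈ F \ M, S b a = 1 := by
        intro a ha
        obtain ⟨haF, haM⟩ := Finset.mem_sdiff.mp ha
        rw [Finset.sum_sdiff_eq_sub hMF]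
        have : ∑ b ∈ M, S b a = 0 :=
          Finset.sum_eq_zero (fun b hb => colzero b hb a haF haM)
        rw [this, hcol a haF, sub_zero]
      exact ih (F \ M) hssub hrow' hcol' i (Finset.mem_sdiff.mpr ⟨hi, hiM⟩)
        j (Finset.mem_sdiff.mpr ⟨hj, hjM⟩) hne

/-- If the nonnegative symmetric matrix `B` is scaled to a doubly stochastic
matrix by positive diagonal matrices `R = diag r`, `C = diag c`, and `I` is the
index set of an irreducible diagonal block of `B` (the block is decoupled from
the other indices and irreducible), then `r` restricted to `I` is proportional
to `c` restricted to `I`; and with `x = √(r c)` elementwise, `diag x * B * diag x`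
is doubly stochastic. -/
theorem stmt_15 (n : ℕ) (B : Matrix (Fin n) (Fin n) ℝ)
    (hB : ∀ i j, 0 ≤ B i j) (hsym : B.IsSymm)
    (r c : Fin n → ℝ) (hr : ∀ i, 0 < r i) (hc : ∀ j, 0 < c j)
    (hds : IsDoublyStochastic (Matrix.diagonal r * B * Matrix.diagonal c))
    (I : Finset (Fin n))
    (hblock : ∀ i ∈ I, ∀ j ∉ I, B i j = 0)
    (hirr : ∀ S ⊆ I, S.Nonempty → S ≠ I → ∃ i ∈ S, ∃ j ∈ I \ S, B i j ≠ 0) :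
    (∃ α : ℝ, 0 < α ∧ ∀ i ∈ I, r i = α * c i) ∧
    IsDoublyStochastic
      (Matrix.diagonal (fun i => Real.sqrt (r i * c i)) * B *
        Matrix.diagonal (fun i => Real.sqrt (r i * c i))) := by
  have hBsym : ∀ i j, B j i = B i j := fun i j => by
    conv_lhs => rw [← hsym]
    rfl
  set S : Matrix (Fin n) (Fin n) ℝ := Matrix.diagonal r * B * Matrix.diagonal c with hSdef
  have hSentry : ∀ i j, S i j = r i * B i j * c j := by
    intro i j
    rw [hSdef, Matrix.mul_diagonal, Matrix.diagonal_mul]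
  obtain ⟨hds0, hds1, hds2⟩ := hds
  set t : Fin n → ℝ := fun i => r i / c i with htdef
  have ht : ∀ i, 0 < t i := fun i => div_pos (hr i) (hc i)
  have hSnn : ∀ i j, 0 ≤ S i j := hds0
  have hrel : ∀ i j, t i * S j i = t j * S i j := by
    intro i j
    rw [hSentry, hSentry, hBsym i j]
    show r i / c i * (r j * B i j * c i) = r j / c j * (r i * B i j * c j)
    have hci := (hc i).ne'
    have hcj := (hc j).ne'
    field_simp
  have H := key_lemma S t ht hSnn hrel Finset.univ
    (fun i _ => hds1 i)
    (fun i _ => hds2 i)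
  have HB : ∀ i j, B i j ≠ 0 → t i = t j := by
    intro i j hb
    refine H i (Finset.mem_univ i) j (Finset.mem_univ j) ?_
    rw [hSentry]
    exact mul_ne_zero (mul_ne_zero (hr i).ne' hb) (hc j).ne'
  constructor
  · rcases I.eq_empty_or_nonempty with hIe | ⟨i₀, hi₀⟩
    · exact ⟨1, one_pos, by simp [hIe]⟩
    · refine ⟨t i₀, ht i₀, ?_⟩
      have hTI : I.filter (fun i => t i = t i₀) = I := by
        by_contra hne
        obtain ⟨i, hiT, j, hjT, hBij⟩ :=
          hirr (I.filter (fun i => t i = t i₀)) (Finset.filter_subset _ _)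
            ⟨i₀, Finset.mem_filter.mpr ⟨hi₀, rfl⟩⟩ hne
        obtain ⟨hjI, hjT'⟩ := Finset.mem_sdiff.mp hjT
        obtain ⟨hiI, hti⟩ := Finset.mem_filter.mp hiT
        exact hjT' (Finset.mem_filter.mpr ⟨hjI, ((HB i j hBij).symm.trans hti)⟩)
      intro i hi
      have : t i = t i₀ := by
        have := hTI ▸ hi
        exact (Finset.mem_filter.mp this).2
      rw [← this]
      show r i = r i / c i * c i
      rw [div_mul_cancel₀ _ (hc i).ne']
  · have hXB : (Matrix.diagonal (fun i => Real.sqrt (r i * c i)) * B *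
        Matrix.diagonal (fun i => Real.sqrt (r i * c i))) = S := by
      ext i j
      rw [hSentry]
      simp only [Matrix.mul_diagonal, Matrix.diagonal_mul]
      by_cases hb : B i j = 0
      · simp [hb]
      · have hrc : r i * c j = r j * c i := by
          have := HB i j hb
          rw [htdef] at this
          have hci := (hc i).ne'
          have hcj := (hc j).ne'
          field_simp at this
          linarith
        have hsq : Real.sqrt (r i * c i) * Real.sqrt (r j * c j) = r i * c j := by
          rw [← Real.sqrt_mul (mul_nonneg (hr i).le (hc i).le)]
          have : r i * c i * (r j * c j) = (r i * c j) ^ 2 := by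
            linear_combination (r i * c j) * hrc.symm
          rw [this, Real.sqrt_sq (mul_nonneg (hr i).le (hc j).le)]
        linear_combination B i j * hsq
    rw [hXB]
    exact ⟨hds0, hds1, hds2⟩
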